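/- Let α, β ∈ ℕ with α, β > 1 be multiplicatively independent. Then the set {α^{n₁}/β^{n₂} : n₁, n₂ ∈ ℕ} is dense in the positive reals (0, ∞). -/
import Mathlib

/-- Stepping lemma: if `c = p*a - q*b > 0` with `p q : ℕ` and `c < ε`, then every real `t`
is within `ε` of some `m*a - n*b` with `m n : ℕ`. -/
lemma step_approx (a b c : ℝ) (ha : 0 < a) (hb : 0 < b) (hc : 0 < c)
    (h1 : ∃ p q : ℕ, (p : ℝ) * a - (q : ℝ) * b = c) (t ε : ℝ) (hcε : c < ε) :
    ∃ m n : ℕ, |((m : ℝ) * a - (n : ℝ) * b) - t| < ε := by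
  obtain ⟨p, q, hpq⟩ := h1
  obtain ⟨n₂, hn₂⟩ := exists_nat_ge (-t / b)
  have hbase : 0 ≤ t + (n₂ : ℝ) * b := by
    have := (div_le_iff₀ hb).mp hn₂
    linarith
  set s := t + (n₂ : ℝ) * b with hs
  set k := ⌈s / c⌉₊ with hk
  have hk1 : s / c ≤ (k : ℝ) := Nat.le_ceil _
  have hk2 : (k : ℝ) < s / c + 1 := by
    exact_mod_cast Nat.ceil_lt_add_one (by positivity : (0:ℝ) ≤ s / c)
  have hkc1 : s ≤ (k : ℝ) * c := by
    rw [div_le_iff₀ hc] at hk1; linarith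
  have hkc2 : (k : ℝ) * c < s + c := by
    have h3 : (k : ℝ) * c < (s / c + 1) * c := mul_lt_mul_of_pos_right hk2 hc
    calc (k:ℝ) * c < (s / c + 1) * c := h3
      _ = s + c := by field_simp
  refine ⟨k * p, n₂ + k * q, ?_⟩
  have hval : ((k * p : ℕ) : ℝ) * a - ((n₂ + k * q : ℕ) : ℝ) * b
      = (k : ℝ) * c - (n₂ : ℝ) * b := by
    push_cast
    nlinarith [hpq]
  rw [hval, abs_lt]
  constructor <;> simp only [hs] at hkc1 hkc2 <;> linarith

theorem ratio_powers_dense (α β : ℕ) (hα : 1 < α) (hβ : 1 < β)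
    (hind : ∀ n₁ n₂ : ℕ, α ^ n₁ = β ^ n₂ → n₁ = 0 ∧ n₂ = 0) :
    Set.Ioi (0 : ℝ) ⊆ closure {x : ℝ | ∃ n₁ n₂ : ℕ, x = (α : ℝ) ^ n₁ / (β : ℝ) ^ n₂} := by
  set a := Real.log α with hadef
  set b := Real.log β with hbdef
  have hα1 : (1 : ℝ) < α := by exact_mod_cast hα
  have hβ1 : (1 : ℝ) < β := by exact_mod_cast hβ
  have ha : 0 < a := Real.log_pos hα1
  have hb : 0 < b := Real.log_pos hβ1
  -- the subgroup generated by a and b is dense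
  have hdense : Dense ((AddSubgroup.closure {a, b} : AddSubgroup ℝ) : Set ℝ) := by
    rcases (AddSubgroup.closure {a, b}).dense_or_cyclic with h | ⟨c, hc⟩
    · exact h
    · exfalso
      have hamem : a ∈ AddSubgroup.closure ({a, b} : Set ℝ) :=
        AddSubgroup.subset_closure (by simp)
      have hbmem : b ∈ AddSubgroup.closure ({a, b} : Set ℝ) :=
        AddSubgroup.subset_closure (by simp)
      rw [hc, AddSubgroup.mem_closure_singleton] at hamem hbmem
      obtain ⟨m, hm⟩ := hamem
      obtain ⟨n, hn⟩ := hbmem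
      have hmc : (m : ℝ) * c = a := by rw [← zsmul_eq_mul, hm]
      have hnc : (n : ℝ) * c = b := by rw [← zsmul_eq_mul, hn]
      have hkey : (n : ℝ) * a = (m : ℝ) * b := by
        rw [← hmc, ← hnc]; ring
      have hm0 : m ≠ 0 := by rintro rfl; simp at hmc; linarith
      have hn0 : n ≠ 0 := by rintro rfl; simp at hnc; linarith
      have habs : ((n.natAbs : ℕ) : ℝ) * a = ((m.natAbs : ℕ) : ℝ) * b := by
        have h1 : |(n : ℝ)| * a = |(m : ℝ)| * b := by
          rw [← abs_of_pos ha, ← abs_of_pos hb, ← abs_mul, ← abs_mul, hkey]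
        rw [Nat.cast_natAbs, Nat.cast_natAbs, Int.cast_abs, Int.cast_abs]
        exact h1
      -- turn into equality of powers
      have hlog : Real.log ((α : ℝ) ^ n.natAbs) = Real.log ((β : ℝ) ^ m.natAbs) := by
        rw [Real.log_pow, Real.log_pow]
        exact_mod_cast habs
      have hpow : ((α : ℝ)) ^ n.natAbs = ((β : ℝ)) ^ m.natAbs := by
        have hx : (0:ℝ) < (α : ℝ) ^ n.natAbs := by positivity
        have hy : (0:ℝ) < (β : ℝ) ^ m.natAbs := by positivity
        rw [← Real.exp_log hx, ← Real.exp_log hy, hlog]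
      have hpow' : α ^ n.natAbs = β ^ m.natAbs := by exact_mod_cast hpow
      exact hn0 (Int.natAbs_eq_zero.mp (hind _ _ hpow').1)
  -- main argument
  intro x hx
  rw [Set.mem_Ioi] at hx
  rw [Metric.mem_closure_iff]
  intro ε hε
  -- continuity of exp at log x
  obtain ⟨δ, hδ, hcont⟩ := Metric.continuousAt_iff.mp Real.continuous_exp.continuousAt ε hε
  -- find a small element of the subgroup
  set ε₀ := min δ (min a b) with hε₀def
  have hε₀ : 0 < ε₀ := lt_min hδ (lt_min ha hb)
  obtain ⟨s₀, hs₀mem, hs₀U⟩ := hdense.exists_mem_open isOpen_Ioo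
    (Set.nonempty_Ioo.mpr (by linarith : (0:ℝ) < ε₀))
  obtain ⟨hs₀pos, hs₀lt⟩ := hs₀U
  rw [SetLike.mem_coe, AddSubgroup.mem_closure_pair] at hs₀mem
  obtain ⟨m, n, hmn⟩ := hs₀mem
  rw [zsmul_eq_mul, zsmul_eq_mul] at hmn
  have hs₀δ : s₀ < δ := lt_of_lt_of_le hs₀lt (min_le_left _ _)
  have hs₀a : s₀ < a := lt_of_lt_of_le hs₀lt (le_trans (min_le_right _ _) (min_le_left _ _))
  have hs₀b : s₀ < b := lt_of_lt_of_le hs₀lt (le_trans (min_le_right _ _) (min_le_right _ _))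
  -- obtain natural approximation of log x
  have happrox : ∃ m' n' : ℕ, |((m' : ℝ) * a - (n' : ℝ) * b) - Real.log x| < δ := by
    rcases le_or_gt 0 m with hm | hm <;> rcases le_or_gt 0 n with hn | hn
    · -- both nonneg : impossible
      exfalso
      rcases Int.le_iff_lt_or_eq.mp hm with hm1 | hm1
      · have : (1:ℝ) ≤ (m:ℝ) := by exact_mod_cast hm1
        nlinarith [mul_nonneg (by exact_mod_cast hn : (0:ℝ) ≤ (n:ℝ)) hb.le]
      · rcases Int.le_iff_lt_or_eq.mp hn with hn1 | hn1
        · have : (1:ℝ) ≤ (n:ℝ) := by exact_mod_cast hn1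
          nlinarith [mul_nonneg (by exact_mod_cast hm : (0:ℝ) ≤ (m:ℝ)) ha.le]
        · rw [← hm1, ← hn1] at hmn; simp at hmn; linarith
    · -- m ≥ 0, n < 0 : s₀ = m.toNat * a - (-n).toNat * b
      apply step_approx a b s₀ ha hb hs₀pos _ _ δ hs₀δ
      refine ⟨m.toNat, (-n).toNat, ?_⟩
      have h1 : ((m.toNat : ℕ) : ℝ) = (m : ℝ) := by
        exact_mod_cast congrArg (Int.cast : ℤ → ℝ) (Int.toNat_of_nonneg hm)
      have h2 : (((-n).toNat : ℕ) : ℝ) = -(n : ℝ) := by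
        have := congrArg (Int.cast : ℤ → ℝ) (Int.toNat_of_nonneg (by linarith : (0:ℤ) ≤ -n))
        push_cast at this
        exact_mod_cast this
      rw [h1, h2]; linarith
    · -- m < 0, n ≥ 0 : swap roles of a and b
      obtain ⟨m', n', h⟩ := step_approx b a s₀ hb ha hs₀pos
        ⟨n.toNat, (-m).toNat, by
          have h1 : ((n.toNat : ℕ) : ℝ) = (n : ℝ) := by
            exact_mod_cast congrArg (Int.cast : ℤ → ℝ) (Int.toNat_of_nonneg hn)
          have h2 : (((-m).toNat : ℕ) : ℝ) = -(m : ℝ) := by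
            have := congrArg (Int.cast : ℤ → ℝ)
              (Int.toNat_of_nonneg (by linarith : (0:ℤ) ≤ -m))
            push_cast at this
            exact_mod_cast this
          rw [h1, h2]; linarith⟩ (-(Real.log x)) δ hs₀δ
      refine ⟨n', m', ?_⟩
      rw [← abs_neg]
      convert h using 2
      ring
    · -- both negative : impossible
      exfalso
      have h1 : (m:ℝ) ≤ -1 := by exact_mod_cast (by omega : m ≤ -1)
      have h2 : (n:ℝ) ≤ -1 := by exact_mod_cast (by omega : n ≤ -1)
      nlinarith
  obtain ⟨m', n', h⟩ := happrox
  refine ⟨(α : ℝ) ^ m' / (β : ℝ) ^ n', ⟨m', n', rfl⟩, ?_⟩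
  have hy : (α : ℝ) ^ m' / (β : ℝ) ^ n' = Real.exp ((m' : ℝ) * a - (n' : ℝ) * b) := by
    rw [Real.exp_sub, Real.exp_nat_mul, Real.exp_nat_mul, Real.exp_log (by linarith),
      Real.exp_log (by linarith)]
  rw [hy]
  have hx' : x = Real.exp (Real.log x) := (Real.exp_log hx).symm
  calc dist x (Real.exp ((m' : ℝ) * a - (n' : ℝ) * b))
      = dist (Real.exp (Real.log x)) (Real.exp ((m' : ℝ) * a - (n' : ℝ) * b)) := by rw [← hx']
    _ = dist (Real.exp ((m' : ℝ) * a - (n' : ℝ) * b)) (Real.exp (Real.log x)) := dist_comm _ _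
    _ < ε := hcont (by rwa [Real.dist_eq])
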